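/- Let n be a nonnegative integer and define T̃_n(a,c) = (1+a−c)_n (c)_n · _3F_2(−n, a/2, (a+1)/2 ; 1+a−c, c ; 4), and Ũ_n(x,y,z) = T̃_n( (1+2x−y−z−2n)/3, (2+x+y−2z−n)/3 ). Let x, y, z ∈ ℂ and assume that for every permutation (x',y',z') of (x,y,z), setting a' = (1+2x'−y'−z'−2n)/3 and c' = (2+x'+y'−2z'−n)/3, the rising factorials (1+a'−c')_n and (c')_n are nonzero. Then Ũ_n(x,y,z) is invariant under all six permutations of (x,y,z). -/

import Mathlib

open Finset

/-- The rising factorial (Pochhammer symbol) `(a)_k = a(a+1)⋯(a+k-1)`. -/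
noncomputable def poch (a : ℂ) (k : ℕ) : ℂ := ∏ i ∈ Finset.range k, (a + i)

/-- `Tt n a c = (1+a-c)_n (c)_n · ₃F₂(-n, a/2, (a+1)/2 ; 1+a-c, c ; 4)`. -/
noncomputable def Tt (n : ℕ) (a c : ℂ) : ℂ :=
  poch (1 + a - c) n * poch c n *
    ∑ k ∈ Finset.range (n + 1),
      (poch (-(n : ℂ)) k * poch (a / 2) k * poch ((a + 1) / 2) k) /
        ((Nat.factorial k : ℂ) * poch (1 + a - c) k * poch c k) * (4 : ℂ) ^ k

/-- `Ut n x y z = Tt n ((1+2x-y-z-2n)/3) ((2+x+y-2z-n)/3)`. -/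
noncomputable def Ut (n : ℕ) (x y z : ℂ) : ℂ :=
  Tt n ((1 + 2 * x - y - z - 2 * (n : ℂ)) / 3) ((2 + x + y - 2 * z - (n : ℂ)) / 3)

lemma poch_zero (a : ℂ) : poch a 0 = 1 := by simp [poch]

lemma poch_succ (a : ℂ) (k : ℕ) : poch a (k+1) = poch a k * (a + k) :=
  Finset.prod_range_succ _ _

lemma poch_succ' (a : ℂ) (k : ℕ) : poch a (k+1) = a * poch (a+1) k := by
  rw [poch, Finset.prod_range_succ']
  rw [mul_comm]
  congr 1
  · push_cast; ring
  · apply Finset.prod_congr rfl; intro i _; push_cast; ring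

lemma poch_cross (x : ℂ) (k : ℕ) : poch x k * (x + k) = x * poch (x+1) k := by
  rw [← poch_succ, poch_succ']

lemma poch_add (a : ℂ) (m k : ℕ) : poch a (m+k) = poch a m * poch (a+m) k := by
  rw [poch, poch, poch, Finset.prod_range_add]
  congr 1
  apply Finset.prod_congr rfl; intro i _; push_cast; ring

lemma poch4 (a : ℂ) (k : ℕ) :
    poch (a/2) k * poch ((a+1)/2) k * 4^k = poch a (2*k) := by
  induction k with
  | zero => simp [poch]
  | succ k ih =>
    rw [show 2*(k+1) = (2*k+1)+1 from rfl, poch_succ, poch_succ, poch_succ, poch_succ, pow_succ]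
    push_cast
    linear_combination (4*(a/2+(k:ℂ))*((a+1)/2+(k:ℂ))) * ih

noncomputable def Qs (n : ℕ) (b c : ℂ) : ℂ :=
  ∑ k ∈ Finset.range (n+1),
    poch (-(n:ℂ)) k / (Nat.factorial k : ℂ) * poch (b+c-1) (2*k) *
      poch (b+k) (n-k) * poch (c+k) (n-k)

lemma poch_ne_zero_of_le {x : ℂ} {n : ℕ} (h : poch x n ≠ 0) {k : ℕ} (hk : k ≤ n) :
    poch x k ≠ 0 := by
  obtain ⟨m, rfl⟩ : ∃ m, n = k + m := ⟨n - k, by omega⟩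
  rw [poch_add] at h
  exact left_ne_zero_of_mul h

lemma tt_eq (n : ℕ) (a c : ℂ) (hb : poch (1+a-c) n ≠ 0) (hc : poch c n ≠ 0) :
    Tt n a c = Qs n (1+a-c) c := by
  rw [Tt, Qs, Finset.mul_sum]
  apply Finset.sum_congr rfl
  intro k hk
  have hk' : k ≤ n := Nat.lt_succ_iff.mp (Finset.mem_range.mp hk)
  have hbk : poch (1+a-c) k ≠ 0 := poch_ne_zero_of_le hb hk'
  have hck : poch c k ≠ 0 := poch_ne_zero_of_le hc hk'
  have hfk : (Nat.factorial k : ℂ) ≠ 0 := by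
    exact_mod_cast Nat.cast_ne_zero.mpr (Nat.factorial_ne_zero k)
  obtain ⟨m, rfl⟩ : ∃ m, n = k + m := ⟨n - k, by omega⟩
  rw [show k + m - k = m from by omega]
  rw [show (1:ℂ)+a-c+c-1 = a from by ring]
  rw [poch_add (1+a-c) k m, poch_add c k m, ← poch4 a k]
  field_simp

lemma Qs_symm (n : ℕ) (b c : ℂ) : Qs n b c = Qs n c b := by
  rw [Qs, Qs]
  apply Finset.sum_congr rfl
  intro k _
  rw [show c+b-1 = b+c-1 from by ring]
  ring

lemma key_term (n k : ℕ) (hk : k ≤ n) (b c : ℂ) :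
    ((n:ℂ)+1) * (poch (-((n:ℂ)+1)) k / (Nat.factorial k : ℂ) * poch (b+c-1) (2*k) *
        poch (b+(k:ℂ)) (n+1-k) * poch (c+(k:ℂ)) (n+1-k))
    = ((n:ℂ)+1) * ((b+c-1) * (-(n:ℂ)-c) *
          (poch (-(n:ℂ)) k / (Nat.factorial k : ℂ) * poch (b+1+c-1) (2*k) *
            poch (b+1+(k:ℂ)) (n-k) * poch (c+(k:ℂ)) (n-k))
        + (b+c-1) * (-(n:ℂ)-b) *
          (poch (-(n:ℂ)) k / (Nat.factorial k : ℂ) * poch (b+(c+1)-1) (2*k) *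
            poch (b+(k:ℂ)) (n-k) * poch (c+1+(k:ℂ)) (n-k))
        + ((n:ℂ)+b) * ((n:ℂ)+c) *
          (poch (-(n:ℂ)) k / (Nat.factorial k : ℂ) * poch (b+c-1) (2*k) *
            poch (b+(k:ℂ)) (n-k) * poch (c+(k:ℂ)) (n-k)))
      + (((k:ℂ) * poch (-((n:ℂ)+1)) k / (Nat.factorial k : ℂ) * poch (b+c-1) (2*k) *
            poch (b+(k:ℂ)) (n+1-k) * poch (c+(k:ℂ)) (n+1-k))
         - ((((k:ℕ)+1 : ℕ):ℂ) * poch (-((n:ℂ)+1)) (k+1) / (Nat.factorial (k+1) : ℂ) *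
              poch (b+c-1) (2*(k+1)) *
            poch (b+((k:ℕ)+1 : ℕ)) (n+1-(k+1)) * poch (c+((k:ℕ)+1 : ℕ)) (n+1-(k+1)))) := by
  have hfk : (Nat.factorial k : ℂ) ≠ 0 := Nat.cast_ne_zero.mpr (Nat.factorial_ne_zero k)
  have hk1 : ((k:ℂ)+1) ≠ 0 := Nat.cast_add_one_ne_zero k
  -- simplify the G(k+1) weight
  have hGk1 : (((k:ℕ)+1 : ℕ):ℂ) * poch (-((n:ℂ)+1)) (k+1) / (Nat.factorial (k+1) : ℂ)
      = poch (-((n:ℂ)+1)) k * (-((n:ℂ)+1)+(k:ℂ)) / (Nat.factorial k : ℂ) := by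
    rw [poch_succ, Nat.factorial_succ]
    push_cast
    field_simp
  rw [hGk1]
  obtain ⟨m, rfl⟩ : ∃ m, n = k + m := ⟨n - k, by omega⟩
  rw [show k+m+1-k = m+1 from by omega, show k+m-k = m from by omega,
      show k+m+1-(k+1) = m from by omega]
  rw [poch_succ (b+(k:ℂ)) m, poch_succ (c+(k:ℂ)) m]
  rw [show 2*(k+1) = 2*k+1+1 from rfl, poch_succ (b+c-1) (2*k+1), poch_succ (b+c-1) (2*k)]
  push_cast
  rw [show b+1+c-1 = b+c-1+1 from by ring, show b+(c+1)-1 = b+c-1+1 from by ring,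
      show b+1+(k:ℂ) = b+(k:ℂ)+1 from by ring, show c+1+(k:ℂ) = c+(k:ℂ)+1 from by ring,
      show b+((k:ℂ)+1) = b+(k:ℂ)+1 from by ring, show c+((k:ℂ)+1) = c+(k:ℂ)+1 from by ring]
  have hf1 := poch_cross (b+(k:ℂ)) m
  have hf2 := poch_cross (c+(k:ℂ)) m
  have hf3 := poch_cross (b+c-1) (2*k)
  push_cast at hf3
  have hf4 := poch_cross (-((k:ℂ)+(m:ℂ)+1)) k
  rw [show -((k:ℂ)+(m:ℂ)+1)+1 = -((k:ℂ)+(m:ℂ)) from by ring] at hf4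
  linear_combination
    (-( (b+c-1) * (-((k:ℂ)+(m:ℂ))-c) * poch (b+c-1+1) (2*k) * poch (b+(k:ℂ)+1) m * poch (c+(k:ℂ)) m
      + (b+c-1) * (-((k:ℂ)+(m:ℂ))-b) * poch (b+c-1+1) (2*k) * poch (b+(k:ℂ)) m * poch (c+(k:ℂ)+1) m
      + ((k:ℂ)+(m:ℂ)+b) * ((k:ℂ)+(m:ℂ)+c) * poch (b+c-1) (2*k) * poch (b+(k:ℂ)) m * poch (c+(k:ℂ)) m)
      / (Nat.factorial k : ℂ)) * hf4
    + (poch (-((k:ℂ)+(m:ℂ)+1)) k * ((m:ℂ)+1) * (b+c-1+2*(k:ℂ)) * poch (b+c-1) (2*k) *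
        poch (c+(k:ℂ)+1) m / (Nat.factorial k : ℂ)) * hf1
    + (poch (-((k:ℂ)+(m:ℂ)+1)) k * ((m:ℂ)+1) * (b+c-1+2*(k:ℂ)) * poch (b+c-1) (2*k) *
        poch (b+(k:ℂ)+1) m / (Nat.factorial k : ℂ)) * hf2
    - (poch (-((k:ℂ)+(m:ℂ)+1)) k * ((m:ℂ)+1) *
        (((k:ℂ)+(m:ℂ)+c) * poch (b+(k:ℂ)+1) m * poch (c+(k:ℂ)) m
          + ((k:ℂ)+(m:ℂ)+b) * poch (b+(k:ℂ)) m * poch (c+(k:ℂ)+1) m)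
        / (Nat.factorial k : ℂ)) * hf3

lemma Qs_rec (n : ℕ) (b c : ℂ) :
    Qs (n+1) b c =
      (b+c-1) * (-(n:ℂ)-c) * Qs n (b+1) c + (b+c-1) * (-(n:ℂ)-b) * Qs n b (c+1)
        + ((n:ℂ)+b) * ((n:ℂ)+c) * Qs n b c := by
  have hn1 : ((n:ℂ)+1) ≠ 0 := Nat.cast_add_one_ne_zero n
  apply mul_left_cancel₀ hn1
  set G : ℕ → ℂ := fun k =>
    (k:ℂ) * poch (-((n:ℂ)+1)) k / (Nat.factorial k : ℂ) * poch (b+c-1) (2*k) *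
      poch (b+(k:ℂ)) (n+1-k) * poch (c+(k:ℂ)) (n+1-k) with hGdef
  have step1 : ((n:ℂ)+1) * Qs (n+1) b c
      = (∑ k ∈ Finset.range (n+1), ((n:ℂ)+1) *
          (poch (-((n:ℂ)+1)) k / (Nat.factorial k : ℂ) * poch (b+c-1) (2*k) *
            poch (b+(k:ℂ)) (n+1-k) * poch (c+(k:ℂ)) (n+1-k))) + G (n+1) := by
    rw [Qs, Finset.sum_range_succ, mul_add, Finset.mul_sum]
    congr 1
    · apply Finset.sum_congr rfl
      intro k _
      push_cast
      ring
    · rw [hGdef]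
      simp only [Nat.add_sub_cancel]
      push_cast
      ring
  rw [step1]
  have key : ∀ k ∈ Finset.range (n+1),
      ((n:ℂ)+1) * (poch (-((n:ℂ)+1)) k / (Nat.factorial k : ℂ) * poch (b+c-1) (2*k) *
          poch (b+(k:ℂ)) (n+1-k) * poch (c+(k:ℂ)) (n+1-k))
      = ((n:ℂ)+1) * ((b+c-1) * (-(n:ℂ)-c) *
            (poch (-(n:ℂ)) k / (Nat.factorial k : ℂ) * poch (b+1+c-1) (2*k) *
              poch (b+1+(k:ℂ)) (n-k) * poch (c+(k:ℂ)) (n-k))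
          + (b+c-1) * (-(n:ℂ)-b) *
            (poch (-(n:ℂ)) k / (Nat.factorial k : ℂ) * poch (b+(c+1)-1) (2*k) *
              poch (b+(k:ℂ)) (n-k) * poch (c+1+(k:ℂ)) (n-k))
          + ((n:ℂ)+b) * ((n:ℂ)+c) *
            (poch (-(n:ℂ)) k / (Nat.factorial k : ℂ) * poch (b+c-1) (2*k) *
              poch (b+(k:ℂ)) (n-k) * poch (c+(k:ℂ)) (n-k)))
        + (G k - G (k+1)) := by
    intro k hk
    have hk' : k ≤ n := Nat.lt_succ_iff.mp (Finset.mem_range.mp hk)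
    have := key_term n k hk' b c
    rw [hGdef]
    push_cast
    push_cast at this
    linear_combination this
  rw [Finset.sum_congr rfl key, Finset.sum_add_distrib, Finset.sum_range_sub' G (n+1)]
  have hG0 : G 0 = 0 := by rw [hGdef]; push_cast; ring
  rw [hG0, zero_sub, neg_add_cancel_right, Qs, Qs, Qs, Finset.mul_sum, Finset.mul_sum,
    Finset.mul_sum, ← Finset.sum_add_distrib, ← Finset.sum_add_distrib, Finset.mul_sum]

lemma Qs_inv : ∀ (n : ℕ) (b c : ℂ), Qs n b c = Qs n (2-(n:ℂ)-b-c) c := by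
  intro n
  induction n with
  | zero => intro b c; simp [Qs, poch]
  | succ n ih =>
    intro b c
    have e1 : Qs n (b+1) c = Qs n (2-((n:ℕ)+1:ℕ)-b-c) c := by
      rw [ih (b+1) c]; congr 1; push_cast; ring
    have e2 : Qs n b (c+1) = Qs n (2-((n:ℕ)+1:ℕ)-b-c) (c+1) := by
      rw [ih b (c+1)]; congr 1; push_cast; ring
    have e3 : Qs n b c = Qs n (2-((n:ℕ)+1:ℕ)-b-c+1) c := by
      rw [ih b c]; congr 1; push_cast; ring
    rw [Qs_rec n b c, Qs_rec n (2-((n:ℕ)+1:ℕ)-b-c) c, e1, e2, e3]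
    push_cast
    ring

theorem stmt_8 (n : ℕ) (x y z : ℂ)
    (h : ∀ p : ℂ × ℂ × ℂ,
      p ∈ ({(x, y, z), (x, z, y), (y, x, z), (y, z, x), (z, x, y), (z, y, x)} :
        Set (ℂ × ℂ × ℂ)) →
      poch (1 + (1 + 2 * p.1 - p.2.1 - p.2.2 - 2 * (n : ℂ)) / 3 -
          (2 + p.1 + p.2.1 - 2 * p.2.2 - (n : ℂ)) / 3) n ≠ 0 ∧
      poch ((2 + p.1 + p.2.1 - 2 * p.2.2 - (n : ℂ)) / 3) n ≠ 0) :
    Ut n x y z = Ut n x z y ∧ Ut n x y z = Ut n y x z ∧ Ut n x y z = Ut n y z x ∧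
      Ut n x y z = Ut n z x y ∧ Ut n x y z = Ut n z y x := by
  have hU : ∀ x' y' z' : ℂ,
      poch (1 + (1 + 2 * x' - y' - z' - 2 * (n : ℂ)) / 3 -
          (2 + x' + y' - 2 * z' - (n : ℂ)) / 3) n ≠ 0 →
      poch ((2 + x' + y' - 2 * z' - (n : ℂ)) / 3) n ≠ 0 →
      Ut n x' y' z' = Qs n ((2 + x' + z' - 2 * y' - (n:ℂ)) / 3)
        ((2 + x' + y' - 2 * z' - (n:ℂ)) / 3) := by
    intro x' y' z' h1 h2
    rw [Ut, tt_eq n _ _ h1 h2]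
    congr 2
    ring
  have eswap : ∀ x' y' z' : ℂ,
      Qs n ((2 + x' + z' - 2 * y' - (n:ℂ)) / 3) ((2 + x' + y' - 2 * z' - (n:ℂ)) / 3)
      = Qs n ((2 + x' + y' - 2 * z' - (n:ℂ)) / 3) ((2 + x' + z' - 2 * y' - (n:ℂ)) / 3) :=
    fun x' y' z' => Qs_symm n _ _
  have exy : ∀ x' y' z' : ℂ,
      Qs n ((2 + x' + z' - 2 * y' - (n:ℂ)) / 3) ((2 + x' + y' - 2 * z' - (n:ℂ)) / 3)
      = Qs n ((2 + y' + z' - 2 * x' - (n:ℂ)) / 3) ((2 + y' + x' - 2 * z' - (n:ℂ)) / 3) := by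
    intro x' y' z'
    rw [show (2 + x' + y' - 2 * z' - (n:ℂ))/3 = (2 + y' + x' - 2 * z' - (n:ℂ))/3 from by ring]
    rw [Qs_inv n]
    rw [show 2-(n:ℂ)-((2 + x' + z' - 2 * y' - (n:ℂ))/3)-((2 + y' + x' - 2 * z' - (n:ℂ))/3)
        = (2 + y' + z' - 2 * x' - (n:ℂ))/3 from by ring]
  have h1 := h (x,y,z) (by simp)
  have h2 := h (x,z,y) (by simp)
  have h3 := h (y,x,z) (by simp)
  have h4 := h (y,z,x) (by simp)
  have h5 := h (z,x,y) (by simp)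
  have h6 := h (z,y,x) (by simp)
  have e1 := hU x y z h1.1 h1.2
  have e2 := hU x z y h2.1 h2.2
  have e3 := hU y x z h3.1 h3.2
  have e4 := hU y z x h4.1 h4.2
  have e5 := hU z x y h5.1 h5.2
  have e6 := hU z y x h6.1 h6.2
  refine ⟨?_, ?_, ?_, ?_, ?_⟩
  · rw [e1, e2]; exact eswap x y z
  · rw [e1, e3]; exact exy x y z
  · rw [e1, e4]; exact (exy x y z).trans (eswap y x z)
  · rw [e1, e5]; exact (eswap x y z).trans (exy x z y)
  · rw [e1, e6]; exact ((exy x y z).trans (eswap y x z)).trans (exy y z x)
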